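/- arXiv:2007.01980 — 6 statements merged into one kernel-verified Lean document; each statement's English description precedes it below -/
import Mathlib

section
/- Let A and B be symmetric positive definite d×d real matrices with A ⪰ B (i.e., A − B is positive semidefinite). Then for every nonzero vector x ∈ ℝ^d, (xᵀ A x)/(xᵀ B x) ≤ det(A)/det(B). -/
open Matrix

set_option maxHeartbeats 1000000

open Finset in
/-- If `A ⪰ B` are positive definite, then the ratio of quadratic forms is bounded by the
ratio of determinants. -/
theorem stmt1 {d : ℕ} (A B : Matrix (Fin d) (Fin d) ℝ) (hA : A.PosDef) (hB : B.PosDef)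
    (hAB : (A - B).PosSemidef) (x : Fin d → ℝ) (hx : x ≠ 0) :
    (x ⬝ᵥ A.mulVec x) / (x ⬝ᵥ B.mulVec x) ≤ A.det / B.det := by
  classical
  open scoped MatrixOrder in
  set S := CFC.sqrt B with hSdef
  open scoped MatrixOrder in
  have hSps : S.PosSemidef := (CFC.sqrt_nonneg B).posSemidef
  have hSherm : S.IsHermitian := hSps.1
  open scoped MatrixOrder in
  have hSsq : S * S = B := CFC.sqrt_mul_sqrt_self B hB.posSemidef.nonneg
  have hdetB : 0 < B.det := hB.det_pos
  have hdetSsq : S.det * S.det = B.det := by rw [← det_mul, hSsq]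
  have hdetS : S.det ≠ 0 := by
    intro h; rw [h, zero_mul] at hdetSsq; exact hdetB.ne hdetSsq
  have hdetSu : IsUnit S.det := isUnit_iff_ne_zero.mpr hdetS
  have hSS : S⁻¹ * S = 1 := nonsing_inv_mul S hdetSu
  have hSS' : S * S⁻¹ = 1 := mul_nonsing_inv S hdetSu
  have hSinvH : (S⁻¹)ᴴ = S⁻¹ := by
    rw [conjTranspose_nonsing_inv, hSherm.eq]
  clear_value S
  set C := S⁻¹ * A * S⁻¹ with hCdef
  have hCps : C.PosSemidef := by
    have h := hA.posSemidef.conjTranspose_mul_mul_same S⁻¹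
    rwa [hSinvH] at h
  have hCh : C.IsHermitian := hCps.1
  -- C - 1 is positive semidefinite
  have hC1 : (C - 1).PosSemidef := by
    have h := hAB.conjTranspose_mul_mul_same S⁻¹
    rw [hSinvH] at h
    have e : S⁻¹ * (A - B) * S⁻¹ = C - 1 := by
      rw [Matrix.mul_sub, Matrix.sub_mul, hCdef]
      congr 1
      rw [← hSsq, ← Matrix.mul_assoc, Matrix.mul_assoc (S⁻¹) S S, ← Matrix.mul_assoc S⁻¹ S,
        hSS, Matrix.one_mul, hSS']
    rwa [e] at h
  clear_value C
  set μ := hCh.eigenvalues with hμdef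
  -- eigenvalues of C are ≥ 1
  have hμ1 : ∀ i, 1 ≤ μ i := by
    intro i
    have hv := hCh.mulVec_eigenvectorBasis i
    have hnorm : ‖hCh.eigenvectorBasis i‖ = 1 := hCh.eigenvectorBasis.orthonormal.1 i
    have hvv : (⇑(hCh.eigenvectorBasis i) : Fin d → ℝ) ⬝ᵥ ⇑(hCh.eigenvectorBasis i) = 1 := by
      have h2 : (inner ℝ (hCh.eigenvectorBasis i) (hCh.eigenvectorBasis i) : ℝ) = 1 := by
        rw [real_inner_self_eq_norm_mul_norm, hnorm, one_mul]
      rw [EuclideanSpace.inner_eq_star_dotProduct, star_trivial] at h2; exact h2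
    have h0 := hC1.dotProduct_mulVec_nonneg ⇑(hCh.eigenvectorBasis i)
    rw [Matrix.sub_mulVec, Matrix.one_mulVec, dotProduct_sub, hv] at h0
    simp only [star_trivial, dotProduct_smul, smul_eq_mul, hvv, mul_one] at h0
    linarith
  have hdetC : C.det = ∏ i, μ i := by
    simpa using hCh.det_eq_prod_eigenvalues
  have hμle : ∀ i, μ i ≤ C.det := by
    intro i
    rw [hdetC]
    have h1 : (1 : ℝ) ≤ ∏ j ∈ Finset.univ.erase i, μ j := by
      have := Finset.prod_le_prod (s := Finset.univ.erase i) (f := fun _ => (1:ℝ)) (g := μ)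
        (fun _ _ => zero_le_one) (fun j _ => hμ1 j)
      simpa using this
    calc μ i = μ i * 1 := (mul_one _).symm
      _ ≤ μ i * ∏ j ∈ Finset.univ.erase i, μ j :=
          mul_le_mul_of_nonneg_left h1 (by linarith [hμ1 i])
      _ = ∏ j, μ j := Finset.mul_prod_erase _ _ (Finset.mem_univ i)
  -- (det C) • 1 - C is PSD
  set U : Matrix (Fin d) (Fin d) ℝ := (hCh.eigenvectorUnitary : Matrix (Fin d) (Fin d) ℝ) with hUdef
  have hUU : U * Uᴴ = 1 := by
    rw [← Matrix.star_eq_conjTranspose]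
    exact (Matrix.mem_unitaryGroup_iff).mp hCh.eigenvectorUnitary.2
  have hDpsd : (C.det • (1 : Matrix (Fin d) (Fin d) ℝ) - C).PosSemidef := by
    have hdiag : (diagonal (fun i => C.det - μ i)).PosSemidef :=
      Matrix.posSemidef_diagonal_iff.mpr (fun i => sub_nonneg.mpr (hμle i))
    have h := hdiag.mul_mul_conjTranspose_same U
    have hspec : C = U * diagonal μ * Uᴴ := by
      have hst := hCh.spectral_theorem
      rwa [RCLike.ofReal_real_eq_id, Function.id_comp, Unitary.conjStarAlgAut_apply,
        Matrix.star_eq_conjTranspose] at hst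
    have key : U * diagonal (fun i => C.det - μ i) * Uᴴ
        = C.det • (1 : Matrix (Fin d) (Fin d) ℝ) - C := by
      have hdd : diagonal (fun i => C.det - μ i)
          = C.det • (1 : Matrix (Fin d) (Fin d) ℝ) - diagonal μ := by
        ext j k
        rcases eq_or_ne j k with rfl | hjk
        · simp
        · simp [Matrix.diagonal_apply_ne _ hjk, Matrix.one_apply_ne hjk]
      rw [hdd, Matrix.mul_sub, Matrix.sub_mul]
      congr 1
      · rw [Matrix.mul_smul, Matrix.smul_mul, Matrix.mul_one, hUU]
      · exact hspec.symm
    rwa [key] at h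
  -- conjugate back: (det C) • B - A is PSD
  have hEpsd : (C.det • B - A).PosSemidef := by
    have h := hDpsd.conjTranspose_mul_mul_same S
    rw [hSherm.eq] at h
    have e1 : S * (C.det • (1 : Matrix (Fin d) (Fin d) ℝ)) * S = C.det • B := by
      rw [Matrix.mul_smul, Matrix.smul_mul, Matrix.mul_one, hSsq]
    have e2 : S * C * S = A := by
      rw [hCdef, ← Matrix.mul_assoc, ← Matrix.mul_assoc, hSS', Matrix.one_mul,
        Matrix.mul_assoc, hSS, Matrix.mul_one]
    have e : S * (C.det • (1 : Matrix (Fin d) (Fin d) ℝ) - C) * S = C.det • B - A := by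
      rw [Matrix.mul_sub, Matrix.sub_mul, e1, e2]
    rwa [e] at h
  -- evaluate at x
  have hkey : x ⬝ᵥ (A *ᵥ x) ≤ C.det * (x ⬝ᵥ (B *ᵥ x)) := by
    have h := hEpsd.dotProduct_mulVec_nonneg x
    rw [Matrix.sub_mulVec, Matrix.smul_mulVec, dotProduct_sub, dotProduct_smul] at h
    simp only [star_trivial, smul_eq_mul] at h
    linarith
  have hxB : 0 < x ⬝ᵥ (B *ᵥ x) := by
    have := hB.re_dotProduct_pos hx
    simpa using this
  have hdetCeq : C.det = A.det / B.det := by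
    have h1 : C.det = S.det⁻¹ * A.det * S.det⁻¹ := by
      rw [hCdef, det_mul, det_mul, det_nonsing_inv, Ring.inverse_eq_inv']
    rw [h1, ← hdetSsq]
    field_simp
  rw [div_le_div_iff₀ hxB hdetB]
  rw [hdetCeq] at hkey
  calc x ⬝ᵥ A.mulVec x * B.det ≤ (A.det / B.det * (x ⬝ᵥ B.mulVec x)) * B.det := by
        exact mul_le_mul_of_nonneg_right hkey hdetB.le
    _ = A.det * (x ⬝ᵥ B.mulVec x) := by field_simp
end

section
/- Generalized elliptical potential lemma: let X₁, …, Xₙ be symmetric positive semidefinite d×d real matrices with Tr(Xᵢ) ≤ 1 for all i, let Λ₀ be a symmetric positive definite matrix, and define Λᵢ = Λᵢ₋₁ + Xᵢ. If Tr(Xᵢ Λ₀⁻¹) ≤ 1 for all i ∈ [n], then ∑_{i=1}^n Tr(Xᵢ Λ_{i-1}⁻¹) ≤ 2 ln(det(Λₙ)/det(Λ₀)). -/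
open Matrix Finset

variable {d : ℕ}

lemma trace_eq_sum_eig (A : Matrix (Fin d) (Fin d) ℝ) (hA : A.IsHermitian) :
    A.trace = ∑ i, hA.eigenvalues i := by
  nth_rewrite 1 [hA.spectral_theorem]
  rw [Unitary.conjStarAlgAut_apply, Matrix.trace_mul_comm, ← Matrix.mul_assoc, Matrix.UnitaryGroup.star_mul_self, one_mul,
    Matrix.trace_diagonal]
  simp

lemma det_one_add (A : Matrix (Fin d) (Fin d) ℝ) (hA : A.IsHermitian) :
    (1 + A).det = ∏ i, (1 + hA.eigenvalues i) := by
  have h1 : (1 : Matrix (Fin d) (Fin d) ℝ) + A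
      = (hA.eigenvectorUnitary : Matrix (Fin d) (Fin d) ℝ) *
        (1 + Matrix.diagonal (RCLike.ofReal ∘ hA.eigenvalues)) *
        (star (hA.eigenvectorUnitary : Matrix (Fin d) (Fin d) ℝ)) := by
    rw [Matrix.mul_add, Matrix.add_mul, Matrix.mul_one, Matrix.mem_unitaryGroup_iff.mp hA.eigenvectorUnitary.2,
      ← Unitary.conjStarAlgAut_apply (S := ℝ), ← hA.spectral_theorem]
  rw [h1, Matrix.det_mul, Matrix.det_mul]
  have h2 : ((hA.eigenvectorUnitary : Matrix (Fin d) (Fin d) ℝ)).det *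
      ((star (hA.eigenvectorUnitary : Matrix (Fin d) (Fin d) ℝ))).det = 1 := by
    rw [mul_comm, ← Matrix.det_mul, Matrix.UnitaryGroup.star_mul_self, Matrix.det_one]
  have : (1 : Matrix (Fin d) (Fin d) ℝ) + Matrix.diagonal (RCLike.ofReal ∘ hA.eigenvalues)
      = Matrix.diagonal (fun i => 1 + hA.eigenvalues i) := by
    rw [← Matrix.diagonal_one, Matrix.diagonal_add]
    simp [Function.comp]
  rw [this, Matrix.det_diagonal]
  rw [mul_right_comm, h2, one_mul]

lemma prod_one_add_ge {f : Fin d → ℝ} (hf : ∀ i, 0 ≤ f i) :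
    1 + ∑ i, f i ≤ ∏ i, (1 + f i) := by
  classical
  have : ∀ s : Finset (Fin d), 1 + ∑ i ∈ s, f i ≤ ∏ i ∈ s, (1 + f i) := by
    intro s
    induction s using Finset.induction with
    | empty => simp
    | @insert a s' hx ih =>
      rw [Finset.sum_insert hx, Finset.prod_insert hx]
      have h0 : 0 ≤ ∑ i ∈ s', f i := Finset.sum_nonneg fun i _ => hf i
      nlinarith [hf a, ih]
  simpa using this Finset.univ

lemma trace_nonneg' {A : Matrix (Fin d) (Fin d) ℝ} (hA : A.PosSemidef) : 0 ≤ A.trace := by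
  rw [trace_eq_sum_eig A hA.isHermitian]
  exact Finset.sum_nonneg fun i _ => hA.eigenvalues_nonneg i

open scoped MatrixOrder in
lemma trace_mul_nonneg {A B : Matrix (Fin d) (Fin d) ℝ} (hA : A.PosSemidef)
    (hB : B.PosSemidef) : 0 ≤ (A * B).trace := by
  obtain ⟨C, rfl⟩ := CStarAlgebra.nonneg_iff_eq_star_mul_self.mp hA.nonneg
  rw [Matrix.mul_assoc, Matrix.trace_mul_comm]
  exact trace_nonneg' ((hB.mul_mul_conjTranspose_same C))

lemma det_one_add_ge {M : Matrix (Fin d) (Fin d) ℝ} (hM : M.PosSemidef) :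
    1 + M.trace ≤ (1 + M).det := by
  rw [det_one_add M hM.isHermitian, trace_eq_sum_eig M hM.isHermitian]
  exact prod_one_add_ge fun i => hM.eigenvalues_nonneg i

lemma log_step {u : ℝ} (h0 : 0 ≤ u) (h1 : u ≤ 1) : u / 2 ≤ Real.log (1 + u) := by
  have hpos : (0:ℝ) < 1 + u := by linarith
  have h2 : Real.log (1 + u)⁻¹ ≤ (1 + u)⁻¹ - 1 :=
    Real.log_le_sub_one_of_pos (by positivity)
  rw [Real.log_inv] at h2
  have h3 : (1 + u)⁻¹ * (1 + u) = 1 := inv_mul_cancel₀ (ne_of_gt hpos)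
  nlinarith [h2, h3]

lemma key_identity {Λ₀ Λ : Matrix (Fin d) (Fin d) ℝ} (h0 : IsUnit Λ₀.det) (h : IsUnit Λ.det) :
    Λ₀⁻¹ - Λ⁻¹ = Λ⁻¹ * ((Λ - Λ₀) + (Λ - Λ₀) * Λ₀⁻¹ * (Λ - Λ₀)) * Λ⁻¹ := by
  simp only [Matrix.mul_add, Matrix.add_mul, Matrix.sub_mul, Matrix.mul_sub, Matrix.mul_assoc,
    Matrix.nonsing_inv_mul_cancel_left _ _ h, Matrix.mul_nonsing_inv_cancel_left _ _ h0,
    Matrix.nonsing_inv_mul_cancel_left _ _ h0, Matrix.mul_nonsing_inv_cancel_left _ _ h,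
    Matrix.mul_nonsing_inv _ h, Matrix.nonsing_inv_mul _ h,
    Matrix.mul_nonsing_inv _ h0, Matrix.nonsing_inv_mul _ h0, Matrix.mul_one, Matrix.one_mul]
  abel

lemma inv_sub_inv_psd {Λ₀ P : Matrix (Fin d) (Fin d) ℝ} (h0 : Λ₀.PosDef) (hP : P.PosSemidef) :
    (Λ₀⁻¹ - (Λ₀ + P)⁻¹).PosSemidef := by
  have hΛ : (Λ₀ + P).PosDef := h0.add_posSemidef hP
  rw [key_identity (isUnit_iff_ne_zero.mpr h0.det_pos.ne') (isUnit_iff_ne_zero.mpr hΛ.det_pos.ne'),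
    add_sub_cancel_left]
  have hM : (P + P * Λ₀⁻¹ * P).PosSemidef := by
    refine hP.add ?_
    have := (h0.inv.posSemidef).conjTranspose_mul_mul_same P
    rwa [hP.isHermitian.eq] at this
  have := hM.conjTranspose_mul_mul_same (Λ₀ + P)⁻¹
  rwa [hΛ.inv.isHermitian.eq] at this

lemma trace_mul_inv_le {X Λ₀ P : Matrix (Fin d) (Fin d) ℝ} (hX : X.PosSemidef)
    (h0 : Λ₀.PosDef) (hP : P.PosSemidef) :
    (X * (Λ₀ + P)⁻¹).trace ≤ (X * Λ₀⁻¹).trace := by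
  have h := trace_mul_nonneg hX (inv_sub_inv_psd h0 hP)
  rw [Matrix.mul_sub, Matrix.trace_sub] at h
  linarith

open scoped MatrixOrder in
lemma det_add_ge {Λ X : Matrix (Fin d) (Fin d) ℝ} (hΛ : Λ.PosDef) (hX : X.PosSemidef) :
    Λ.det * (1 + (X * Λ⁻¹).trace) ≤ (Λ + X).det := by
  set S := CFC.sqrt Λ with hSdef
  have hS : S * S = Λ := CFC.sqrt_mul_sqrt_self Λ hΛ.posSemidef.nonneg
  have hSh : S.IsHermitian := (CFC.sqrt_nonneg Λ).posSemidef.isHermitian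
  have hdet : S.det * S.det = Λ.det := by rw [← Matrix.det_mul, hS]
  have hSd : IsUnit S.det := by
    rw [isUnit_iff_ne_zero]
    intro h
    rw [h, mul_zero] at hdet
    exact hΛ.det_pos.ne' hdet.symm
  set M := S⁻¹ * X * S⁻¹ with hMdef
  have hMpsd : M.PosSemidef := by
    have := hX.conjTranspose_mul_mul_same S⁻¹
    rwa [Matrix.conjTranspose_nonsing_inv, hSh.eq] at this
  have hfac : Λ + X = S * (1 + M) * S := by
    rw [Matrix.mul_add, Matrix.add_mul, Matrix.mul_one, hS]
    congr 1
    simp only [hMdef, Matrix.mul_assoc, Matrix.mul_nonsing_inv_cancel_left _ _ hSd,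
      Matrix.nonsing_inv_mul _ hSd, Matrix.mul_one]
  have htr : M.trace = (X * Λ⁻¹).trace := by
    have hinv : Λ⁻¹ = S⁻¹ * S⁻¹ := by rw [← hS, Matrix.mul_inv_rev]
    rw [hinv, hMdef, Matrix.trace_mul_comm (S⁻¹ * X) S⁻¹, ← Matrix.mul_assoc,
      Matrix.trace_mul_comm (S⁻¹ * S⁻¹) X]
  rw [hfac, Matrix.det_mul, Matrix.det_mul, ← htr]
  nlinarith [det_one_add_ge hMpsd, hΛ.det_pos, trace_nonneg' hMpsd]

/-- Generalized elliptical potential lemma. -/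
theorem stmt3 {d : ℕ} (n : ℕ) (X : ℕ → Matrix (Fin d) (Fin d) ℝ)
    (Λ₀ : Matrix (Fin d) (Fin d) ℝ) (hΛ₀ : Λ₀.PosDef)
    (hXpsd : ∀ i < n, (X i).PosSemidef)
    (hXtr : ∀ i < n, (X i).trace ≤ 1)
    (hXtr0 : ∀ i < n, (X i * Λ₀⁻¹).trace ≤ 1) :
    ∑ i ∈ Finset.range n, (X i * (Λ₀ + ∑ j ∈ Finset.range i, X j)⁻¹).trace
      ≤ 2 * Real.log ((Λ₀ + ∑ j ∈ Finset.range n, X j).det / Λ₀.det) := by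
  set L : ℕ → Matrix (Fin d) (Fin d) ℝ := fun i => Λ₀ + ∑ j ∈ Finset.range i, X j with hLdef
  have hPsum : ∀ i ≤ n, (∑ j ∈ Finset.range i, X j).PosSemidef := by
    intro i hi
    induction i with
    | zero => simpa using (Matrix.PosSemidef.zero (n := Fin d) (R := ℝ))
    | succ k ih =>
      rw [Finset.sum_range_succ]
      exact (ih (Nat.le_of_succ_le hi)).add (hXpsd k hi)
  have hLpd : ∀ i ≤ n, (L i).PosDef := fun i hi => hΛ₀.add_posSemidef (hPsum i hi)
  set f : ℕ → ℝ := fun i => Real.log (L i).det with hfdef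
  have step : ∀ i ∈ Finset.range n,
      (X i * (L i)⁻¹).trace ≤ 2 * (f (i + 1) - f i) := by
    intro i hi
    rw [Finset.mem_range] at hi
    set u : ℝ := (X i * (L i)⁻¹).trace with hudef
    have hLi : (L i).PosDef := hLpd i hi.le
    have hu0 : 0 ≤ u := trace_mul_nonneg (hXpsd i hi) hLi.inv.posSemidef
    have hu1 : u ≤ 1 :=
      le_trans (trace_mul_inv_le (hXpsd i hi) hΛ₀ (hPsum i hi.le)) (hXtr0 i hi)
    have hdet : (L i).det * (1 + u) ≤ (L (i + 1)).det := by
      have h1 : L (i + 1) = L i + X i := by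
        simp only [hLdef, Finset.sum_range_succ, add_assoc]
      rw [h1]
      exact det_add_ge hLi (hXpsd i hi)
    have hpos : 0 < (L i).det * (1 + u) := by
      have := hLi.det_pos; nlinarith
    have hlog : Real.log ((L i).det * (1 + u)) ≤ f (i + 1) :=
      Real.log_le_log hpos hdet
    rw [Real.log_mul hLi.det_pos.ne' (by linarith : (1 : ℝ) + u ≠ 0)] at hlog
    have := log_step hu0 hu1
    simp only [hfdef] at hlog ⊢
    linarith
  calc ∑ i ∈ Finset.range n, (X i * (L i)⁻¹).trace
      ≤ ∑ i ∈ Finset.range n, 2 * (f (i + 1) - f i) := Finset.sum_le_sum step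
    _ = 2 * ∑ i ∈ Finset.range n, (f (i + 1) - f i) := by rw [Finset.mul_sum]
    _ = 2 * (f n - f 0) := by rw [Finset.sum_range_sub]
    _ = 2 * Real.log ((L n).det / Λ₀.det) := by
        have h0 : f 0 = Real.log Λ₀.det := by simp [hfdef, hLdef]
        rw [Real.log_div (hLpd n le_rfl).det_pos.ne' hΛ₀.det_pos.ne', h0]
end

section
/- Lipschitzness of matrix square root: for any two symmetric positive definite d×d real matrices A, B with A ⪰ λI and B ⪰ λI for some λ > 0, the quadratic forms satisfy |xᵀ(A^{1/2} − B^{1/2})x| ≤ ‖A − B‖/(2√λ) for every unit vector x, and hence ‖A^{1/2} − B^{1/2}‖ ≤ ‖A − B‖/(2√λ). -/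
open Matrix

open scoped ComplexOrder in
/-- The positive semidefinite square root of a positive semidefinite matrix
(the definition `Matrix.PosSemidef.sqrt` of the older Mathlib, removed since). -/
noncomputable def Matrix.PosSemidef.sqrt {n 𝕜 : Type*} [Fintype n] [DecidableEq n] [RCLike 𝕜]
    {A : Matrix n n 𝕜} (hA : A.PosSemidef) : Matrix n n 𝕜 :=
  hA.1.eigenvectorUnitary.1 * diagonal ((↑) ∘ (Real.sqrt ·) ∘ hA.1.eigenvalues) *
    (star hA.1.eigenvectorUnitary : Matrix n n 𝕜)

lemma Matrix.PosSemidef.posSemidef_sqrt {d : ℕ} {A : Matrix (Fin d) (Fin d) ℝ}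
    (hA : A.PosSemidef) : hA.sqrt.PosSemidef := by
  unfold Matrix.PosSemidef.sqrt
  have h : (star hA.1.eigenvectorUnitary : Matrix (Fin d) (Fin d) ℝ)
      = (hA.1.eigenvectorUnitary : Matrix (Fin d) (Fin d) ℝ)ᴴ := by
    simp [Matrix.star_eq_conjTranspose]
  rw [h]
  refine (PosSemidef.diagonal ?_).mul_mul_conjTranspose_same _
  intro i
  simp [Real.sqrt_nonneg]

lemma Matrix.PosSemidef.sqrt_mul_self {d : ℕ} {A : Matrix (Fin d) (Fin d) ℝ}
    (hA : A.PosSemidef) : hA.sqrt * hA.sqrt = A := by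
  unfold Matrix.PosSemidef.sqrt
  have hU : (star hA.1.eigenvectorUnitary : Matrix (Fin d) (Fin d) ℝ)
      * (hA.1.eigenvectorUnitary : Matrix (Fin d) (Fin d) ℝ) = 1 :=
    Unitary.star_mul_self_of_mem hA.1.eigenvectorUnitary.2
  conv_rhs => rw [hA.1.spectral_theorem]
  simp only [mul_assoc]
  rw [← mul_assoc (star _ : Matrix (Fin d) (Fin d) ℝ) _ _, hU, one_mul, ← mul_assoc (diagonal _),
    diagonal_mul_diagonal]
  simp only [Unitary.conjStarAlgAut_apply, mul_assoc]
  congr 3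
  funext i
  simp [Real.mul_self_sqrt (hA.eigenvalues_nonneg i)]

open scoped RealInnerProductSpace

section Helpers
variable {d : ℕ}

lemma dot_eq_inner' (x y : Fin d → ℝ) :
    x ⬝ᵥ y = (inner ℝ ((WithLp.equiv 2 (Fin d → ℝ)).symm x) ((WithLp.equiv 2 (Fin d → ℝ)).symm y) : ℝ) := by
  simp [PiLp.inner_apply, dotProduct, mul_comm]

lemma opNorm_le_of_eigs {M : Matrix (Fin d) (Fin d) ℝ} (hM : M.IsHermitian) {c : ℝ} (hc : 0 ≤ c)
    (h : ∀ (μ : ℝ) (v : Fin d → ℝ), v ⬝ᵥ v = 1 → M *ᵥ v = μ • v → |μ| ≤ c) :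
    ‖Matrix.toEuclideanCLM (𝕜 := ℝ) M‖ ≤ c := by
  have hsym := (Matrix.isHermitian_iff_isSymmetric.1 hM)
  have hn : Module.finrank ℝ (EuclideanSpace ℝ (Fin d)) = d := finrank_euclideanSpace_fin
  set b := hsym.eigenvectorBasis hn with hb
  have heig : ∀ i, |hsym.eigenvalues hn i| ≤ c := by
    intro i
    have hev := hsym.apply_eigenvectorBasis hn i
    refine h _ (WithLp.equiv 2 (Fin d → ℝ) (b i)) ?_ ?_
    · rw [dot_eq_inner']
      simp only [Equiv.symm_apply_apply]
      rw [real_inner_self_eq_norm_sq, b.orthonormal.1 i]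
      norm_num
    · have := congrArg (WithLp.equiv 2 (Fin d → ℝ)) hev
      rw [WithLp.equiv_apply, Matrix.piLp_ofLp_toEuclideanLin] at this
      simpa using this
  refine ContinuousLinearMap.opNorm_le_bound _ hc ?_
  intro x
  set r := fun i => b.repr x i with hr
  have hTx : ∀ i, b.repr (Matrix.toEuclideanCLM (𝕜 := ℝ) M x) i = hsym.eigenvalues hn i * r i := by
    intro i
    have := hsym.eigenvectorBasis_apply_self_apply hn x i
    exact this
  have h1 : ‖Matrix.toEuclideanCLM (𝕜 := ℝ) M x‖
      = Real.sqrt (∑ i, (hsym.eigenvalues hn i * r i) ^ 2) := by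
    rw [← b.repr.norm_map, EuclideanSpace.norm_eq]
    congr 1
    refine Finset.sum_congr rfl fun i _ => ?_
    rw [hTx i, Real.norm_eq_abs, sq_abs]
  have h2 : ‖x‖ = Real.sqrt (∑ i, (r i) ^ 2) := by
    rw [← b.repr.norm_map, EuclideanSpace.norm_eq]
    simp [Real.norm_eq_abs, sq_abs, hr]
  rw [h1, h2, ← Real.sqrt_sq hc, ← Real.sqrt_mul (by positivity)]
  apply Real.sqrt_le_sqrt
  rw [Finset.mul_sum]
  refine Finset.sum_le_sum fun i _ => ?_
  rw [mul_pow, ← mul_pow]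
  have : (hsym.eigenvalues hn i)^2 ≤ c^2 := by
    rw [← sq_abs]
    exact pow_le_pow_left₀ (abs_nonneg _) (heig i) 2
  nlinarith [sq_nonneg (r i)]

lemma quad_ge_of_eigs {M : Matrix (Fin d) (Fin d) ℝ} (hM : M.IsHermitian) {μ0 : ℝ}
    (h : ∀ (μ : ℝ) (v : Fin d → ℝ), v ⬝ᵥ v = 1 → M *ᵥ v = μ • v → μ0 ≤ μ)
    (x : Fin d → ℝ) :
    μ0 * (x ⬝ᵥ x) ≤ x ⬝ᵥ M *ᵥ x := by
  have hsym := (Matrix.isHermitian_iff_isSymmetric.1 hM)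
  have hn : Module.finrank ℝ (EuclideanSpace ℝ (Fin d)) = d := finrank_euclideanSpace_fin
  set b := hsym.eigenvectorBasis hn with hb
  have heig : ∀ i, μ0 ≤ hsym.eigenvalues hn i := by
    intro i
    have hev := hsym.apply_eigenvectorBasis hn i
    refine h _ (WithLp.equiv 2 (Fin d → ℝ) (b i)) ?_ ?_
    · rw [dot_eq_inner']
      simp only [Equiv.symm_apply_apply]
      rw [real_inner_self_eq_norm_sq, b.orthonormal.1 i]
      norm_num
    · have := congrArg (WithLp.equiv 2 (Fin d → ℝ)) hev
      rw [WithLp.equiv_apply, Matrix.piLp_ofLp_toEuclideanLin] at this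
      simpa using this
  set x' := (WithLp.equiv 2 (Fin d → ℝ)).symm x with hx'
  set r := fun i => b.repr x' i with hr
  have key1 : x ⬝ᵥ M *ᵥ x = ∑ i, hsym.eigenvalues hn i * (r i)^2 := by
    rw [dot_eq_inner', WithLp.equiv_symm_apply, ← Matrix.toEuclideanLin_apply_piLp_toLp,
      ← b.repr.inner_map_map, PiLp.inner_apply]
    refine Finset.sum_congr rfl fun i _ => ?_
    rw [hsym.eigenvectorBasis_apply_self_apply hn]
    simp [hr, hx']
    ring
  have key2 : x ⬝ᵥ x = ∑ i, (r i)^2 := by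
    rw [dot_eq_inner', ← b.repr.inner_map_map, PiLp.inner_apply]
    refine Finset.sum_congr rfl fun i _ => ?_
    simp [hr, hx']
  rw [key1, key2, Finset.mul_sum]
  exact Finset.sum_le_sum fun i _ => mul_le_mul_of_nonneg_right (heig i) (sq_nonneg _)

lemma abs_quad_le (M : Matrix (Fin d) (Fin d) ℝ) (x : Fin d → ℝ) (hx : x ⬝ᵥ x = 1) :
    |x ⬝ᵥ M *ᵥ x| ≤ ‖Matrix.toEuclideanCLM (𝕜 := ℝ) M‖ := by
  set x' := (WithLp.equiv 2 (Fin d → ℝ)).symm x with hx'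
  have hnx : ‖x'‖ = 1 := by
    have : (1:ℝ) = ‖x'‖^2 := by rw [← real_inner_self_eq_norm_sq, ← dot_eq_inner', hx]
    nlinarith [norm_nonneg x']
  have heq : x ⬝ᵥ M *ᵥ x = ⟪x', Matrix.toEuclideanCLM (𝕜 := ℝ) M x'⟫ := by
    rw [hx', WithLp.equiv_symm_apply, Matrix.toEuclideanCLM_toLp, ← WithLp.equiv_symm_apply, ← dot_eq_inner']
  rw [heq]
  calc |⟪x', Matrix.toEuclideanCLM (𝕜 := ℝ) M x'⟫| ≤ ‖x'‖ * ‖Matrix.toEuclideanCLM (𝕜 := ℝ) M x'‖ :=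
        abs_real_inner_le_norm _ _
    _ ≤ ‖x'‖ * (‖Matrix.toEuclideanCLM (𝕜 := ℝ) M‖ * ‖x'‖) := by
        gcongr
        exact ContinuousLinearMap.le_opNorm _ _
    _ = ‖Matrix.toEuclideanCLM (𝕜 := ℝ) M‖ := by rw [hnx]; ring

lemma psd_quad' {M : Matrix (Fin d) (Fin d) ℝ} (hM : M.PosSemidef) (v : Fin d → ℝ) :
    0 ≤ v ⬝ᵥ M *ᵥ v := by
  have := hM.dotProduct_mulVec_nonneg v; simpa using this

lemma sqrt_eig_lower {lam : ℝ} (hlam : 0 < lam) {A : Matrix (Fin d) (Fin d) ℝ}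
    (hA : A.PosSemidef) (hAl : (A - lam • 1).PosSemidef)
    (μ : ℝ) (v : Fin d → ℝ) (hv : v ⬝ᵥ v = 1) (hev : hA.sqrt *ᵥ v = μ • v) :
    Real.sqrt lam ≤ μ := by
  have hμ0 : 0 ≤ μ := by
    have h0 := psd_quad' hA.posSemidef_sqrt v
    rw [hev] at h0
    simpa [dotProduct_smul, hv] using h0
  have hAv : v ⬝ᵥ A *ᵥ v = μ^2 := by
    rw [← hA.sqrt_mul_self, ← Matrix.mulVec_mulVec, hev, Matrix.mulVec_smul, hev]
    simp [dotProduct_smul, hv]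
    ring
  have hlam2 : lam ≤ μ^2 := by
    have h0 := psd_quad' hAl v
    rw [Matrix.sub_mulVec] at h0
    simp [dotProduct_sub, Matrix.smul_mulVec, dotProduct_smul, hv, hAv] at h0
    linarith
  calc Real.sqrt lam ≤ Real.sqrt (μ^2) := Real.sqrt_le_sqrt hlam2
    _ = μ := by rw [Real.sqrt_sq hμ0]

end Helpers


/-- The operator (spectral) norm of a real matrix, viewed as a linear map on Euclidean space. -/
noncomputable def opNorm {d : ℕ} (A : Matrix (Fin d) (Fin d) ℝ) : ℝ :=
  ‖Matrix.toEuclideanCLM (𝕜 := ℝ) A‖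

/-- Lipschitzness of the matrix square root: if `A, B ⪰ λ I` then for every unit vector `x`,
`|xᵀ(√A - √B)x| ≤ ‖A - B‖ / (2√λ)`, and hence `‖√A - √B‖ ≤ ‖A - B‖ / (2√λ)`. -/
theorem stmt7 {d : ℕ} (lam : ℝ) (hlam : 0 < lam)
    (A B : Matrix (Fin d) (Fin d) ℝ) (hA : A.PosDef) (hB : B.PosDef)
    (hAl : (A - lam • 1).PosSemidef) (hBl : (B - lam • 1).PosSemidef) :
    (∀ x : Fin d → ℝ, x ⬝ᵥ x = 1 →
      |x ⬝ᵥ (hA.posSemidef.sqrt - hB.posSemidef.sqrt).mulVec x|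
        ≤ opNorm (A - B) / (2 * Real.sqrt lam)) ∧
    opNorm (hA.posSemidef.sqrt - hB.posSemidef.sqrt) ≤ opNorm (A - B) / (2 * Real.sqrt lam) := by
  set S := hA.posSemidef.sqrt with hSdef
  set R := hB.posSemidef.sqrt with hRdef
  have hS : S.PosSemidef := hA.posSemidef.posSemidef_sqrt
  have hR : R.PosSemidef := hB.posSemidef.posSemidef_sqrt
  have hSS : S * S = A := hA.posSemidef.sqrt_mul_self
  have hRR : R * R = B := hB.posSemidef.sqrt_mul_self
  have hsl : 0 < Real.sqrt lam := Real.sqrt_pos.2 hlam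
  have hSq := quad_ge_of_eigs hS.1 (sqrt_eig_lower hlam hA.posSemidef hAl)
  have hRq := quad_ge_of_eigs hR.1 (sqrt_eig_lower hlam hB.posSemidef hBl)
  set D := S - R with hDdef
  have hDh : D.IsHermitian := hS.1.sub hR.1
  have hDt : Dᵀ = D := by
    ext i j
    simpa using congrFun (congrFun hDh i) j
  set c := opNorm (A - B) / (2 * Real.sqrt lam) with hc
  have hc0 : 0 ≤ c := div_nonneg (norm_nonneg _) (by positivity)
  have hDe : ∀ (μ : ℝ) (v : Fin d → ℝ), v ⬝ᵥ v = 1 → D *ᵥ v = μ • v → |μ| ≤ c := by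
    intro μ v hv hev
    have hAB : A - B = S * D + D * R := by
      rw [hDdef, ← hSS, ← hRR]
      noncomm_ring
    have hkey : v ⬝ᵥ (A - B) *ᵥ v = μ * (v ⬝ᵥ S *ᵥ v + v ⬝ᵥ R *ᵥ v) := by
      rw [hAB, Matrix.add_mulVec, dotProduct_add, ← Matrix.mulVec_mulVec, hev,
        Matrix.mulVec_smul, dotProduct_smul, ← Matrix.mulVec_mulVec]
      have : v ⬝ᵥ D *ᵥ (R *ᵥ v) = μ • (v ⬝ᵥ R *ᵥ v) := by
        rw [Matrix.dotProduct_mulVec, ← Matrix.mulVec_transpose, hDt, hev]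
        rw [smul_dotProduct]
      rw [this]
      simp [smul_eq_mul]
      ring
    have h1 : |v ⬝ᵥ (A - B) *ᵥ v| ≤ opNorm (A - B) := abs_quad_le _ v hv
    have h2 : 2 * Real.sqrt lam ≤ v ⬝ᵥ S *ᵥ v + v ⬝ᵥ R *ᵥ v := by
      have hs := hSq v
      have hr := hRq v
      rw [hv, mul_one] at hs hr
      linarith
    rw [hc, le_div_iff₀ (by positivity)]
    calc |μ| * (2 * Real.sqrt lam) ≤ |μ| * (v ⬝ᵥ S *ᵥ v + v ⬝ᵥ R *ᵥ v) := by
          gcongr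
      _ = |v ⬝ᵥ (A - B) *ᵥ v| := by
          have h3 : (0:ℝ) ≤ v ⬝ᵥ S *ᵥ v + v ⬝ᵥ R *ᵥ v := by linarith
          rw [hkey, abs_mul, abs_of_nonneg h3]
      _ ≤ opNorm (A - B) := h1
  have hnorm : opNorm D ≤ c := opNorm_le_of_eigs hDh hc0 hDe
  refine ⟨fun x hx => le_trans (abs_quad_le D x hx) hnorm, hnorm⟩
end

section
/- Softmax approximates max: let s₁, …, s_k ≥ 0 be nonnegative reals, not all zero, and let α ≥ log₂ k. If an index i is drawn with probability proportional to sᵢ^α, then the expected value E[sᵢ] ≥ (1/4) · max{s₁, …, s_k}. -/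
/-- Softmax approximates the max: if `α ≥ log₂ k`, sampling `i` with probability proportional
to `sᵢ^α` yields expected value at least a quarter of the maximum. -/
theorem stmt9 (k : ℕ) (hk : 0 < k) (s : Fin k → ℝ) (hs : ∀ i, 0 ≤ s i)
    (hne : ∃ i, s i ≠ 0) (α : ℝ) (hα : Real.logb 2 k ≤ α) :
    (1 / 4) * Finset.univ.sup' (Finset.univ_nonempty_iff.mpr (Fin.pos_iff_nonempty.mp hk)) s
      ≤ ∑ i, (s i ^ α / ∑ j, s j ^ α) * s i := by
  have hne' : (Finset.univ : Finset (Fin k)).Nonempty :=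
    Finset.univ_nonempty_iff.mpr (Fin.pos_iff_nonempty.mp hk)
  set M := Finset.univ.sup' hne' s with hMdef
  obtain ⟨i₀, -, hi₀⟩ := Finset.exists_mem_eq_sup' hne' s
  obtain ⟨j, hj⟩ := hne
  have hMle : ∀ i, s i ≤ M := fun i => Finset.le_sup' s (Finset.mem_univ i)
  have hMpos : 0 < M := lt_of_lt_of_le (lt_of_le_of_ne (hs j) (Ne.symm hj)) (hMle j)
  have hα0 : 0 ≤ α :=
    le_trans (Real.logb_nonneg one_lt_two (by exact_mod_cast hk)) hα
  have hk2 : (k : ℝ) ≤ 2 ^ α := by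
    have h := (Real.rpow_le_rpow_left_iff (x := 2) one_lt_two).mpr hα
    rwa [Real.rpow_logb (by norm_num) (by norm_num) (by exact_mod_cast hk)] at h
  set A := Finset.univ.filter (fun i => M / 2 ≤ s i) with hAdef
  have hi₀A : i₀ ∈ A := by
    refine Finset.mem_filter.mpr ⟨Finset.mem_univ _, ?_⟩
    rw [← hi₀]; linarith
  have hpow_nonneg : ∀ i, 0 ≤ s i ^ α := fun i => Real.rpow_nonneg (hs i) α
  have hMα_pos : 0 < M ^ α := Real.rpow_pos_of_pos hMpos α
  -- sum over A
  set SA := ∑ i ∈ A, s i ^ α with hSAdef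
  have hSA_ge : M ^ α ≤ SA := by
    have hMi : M = s i₀ := hi₀
    have := Finset.single_le_sum (f := fun i => s i ^ α) (fun i _ => hpow_nonneg i) hi₀A
    rw [hMi]; exact this
  have hSA_pos : 0 < SA := lt_of_lt_of_le hMα_pos hSA_ge
  -- sum over complement
  have hB_bound : ∑ i ∈ Finset.univ \ A, s i ^ α ≤ M ^ α := by
    have hterm : ∀ i ∈ Finset.univ \ A, s i ^ α ≤ M ^ α / k := by
      intro i hi
      have hi' : ¬ (M / 2 ≤ s i) := by
        intro h
        exact (Finset.mem_sdiff.mp hi).2 (Finset.mem_filter.mpr ⟨Finset.mem_univ _, h⟩)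
      have h1 : s i ^ α ≤ (M / 2) ^ α :=
        Real.rpow_le_rpow (hs i) (le_of_not_ge hi') hα0
      have h2 : (M / 2) ^ α = M ^ α / 2 ^ α :=
        Real.div_rpow hMpos.le (by norm_num) α
      have h3 : M ^ α / 2 ^ α ≤ M ^ α / k := by
        apply div_le_div_of_nonneg_left hMα_pos.le _ hk2
        exact_mod_cast hk
      linarith [h1, h2 ▸ h1]
    calc ∑ i ∈ Finset.univ \ A, s i ^ α ≤ ∑ _i ∈ Finset.univ \ A, M ^ α / k :=
          Finset.sum_le_sum hterm
      _ = (Finset.univ \ A).card * (M ^ α / k) := by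
          rw [Finset.sum_const, nsmul_eq_mul]
      _ ≤ k * (M ^ α / k) := by
          have hcard : ((Finset.univ \ A).card : ℝ) ≤ k := by
            have := Finset.card_le_univ (Finset.univ \ A)
            simp only [Finset.card_univ, Fintype.card_fin] at this
            exact_mod_cast this
          apply mul_le_mul_of_nonneg_right hcard
          positivity
      _ = M ^ α := by field_simp
  set S := ∑ j, s j ^ α with hSdef
  have hA_sub : A ⊆ Finset.univ := Finset.filter_subset _ _
  have hsplit : S = SA + ∑ i ∈ Finset.univ \ A, s i ^ α := by
    rw [hSdef, hSAdef, ← Finset.sum_sdiff hA_sub]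
    ring
  have hS_le : S ≤ 2 * SA := by
    rw [hsplit]; linarith [hB_bound, hSA_ge]
  have hS_pos : 0 < S := by
    have h := Finset.sum_nonneg (fun i (_ : i ∈ Finset.univ \ A) => hpow_nonneg i)
    rw [hsplit]; linarith
  -- rewrite goal
  have hgoal : ∑ i, (s i ^ α / S) * s i = (∑ i, s i ^ α * s i) / S := by
    rw [Finset.sum_div]
    exact Finset.sum_congr rfl fun i _ => by ring
  rw [hgoal, le_div_iff₀ hS_pos]
  have hT : M / 2 * SA ≤ ∑ i, s i ^ α * s i := by
    have h1 : ∑ i ∈ A, (M / 2) * s i ^ α ≤ ∑ i ∈ A, s i ^ α * s i := by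
      apply Finset.sum_le_sum
      intro i hi
      have : M / 2 ≤ s i := (Finset.mem_filter.mp hi).2
      nlinarith [hpow_nonneg i]
    have h2 : ∑ i ∈ A, s i ^ α * s i ≤ ∑ i, s i ^ α * s i := by
      apply Finset.sum_le_sum_of_subset_of_nonneg (Finset.filter_subset _ _)
      intro i _ _
      exact mul_nonneg (hpow_nonneg i) (hs i)
    rw [← Finset.mul_sum] at h1
    linarith
  nlinarith [hS_le, hT, hSA_pos, hMpos]
end

section
/- Softmax probability stability: let α = ln K, let M, M′ be symmetric matrices with M ⪰ d⁻¹ I and ‖M − M′‖ ≤ 1/R where R ≥ 100 λ⁻¹ d ln K for some λ ∈ (0,1). Then for every vector x with ‖x‖ ≤ 1 and every finite set X of such vectors containing x, the softmax probabilities satisfy P[π_{M′}(X) = x] ≥ (1 − λ/30) · P[π_M(X) = x], where π_M(X) selects x ∈ X with probability (xᵀ M x)^α / ∑_{y∈X} (yᵀ M y)^α. -/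
open Matrix

lemma quad_bound {d : ℕ} (A : Matrix (Fin d) (Fin d) ℝ) (y : Fin d → ℝ) :
    |y ⬝ᵥ A.mulVec y| ≤ opNorm A * (y ⬝ᵥ y) := by
  set v : EuclideanSpace ℝ (Fin d) := (WithLp.equiv 2 _).symm y with hv
  have h1 : y ⬝ᵥ A.mulVec y = inner ℝ v (Matrix.toEuclideanCLM (𝕜 := ℝ) A v) := by
    rw [hv, WithLp.equiv_symm_apply, Matrix.toEuclideanCLM_toLp]
    simp [PiLp.inner_apply, dotProduct, WithLp.equiv, Equiv.refl_apply, mul_comm]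
  have h2 : y ⬝ᵥ y = ‖v‖ ^ 2 := by
    rw [← real_inner_self_eq_norm_sq]
    simp only [hv, PiLp.inner_apply, dotProduct, WithLp.equiv, Equiv.refl_apply]; rfl
  rw [h1, h2]
  calc |inner ℝ v (Matrix.toEuclideanCLM (𝕜 := ℝ) A v)|
      ≤ ‖v‖ * ‖Matrix.toEuclideanCLM (𝕜 := ℝ) A v‖ := abs_real_inner_le_norm _ _
    _ ≤ ‖v‖ * (opNorm A * ‖v‖) := by
        exact mul_le_mul_of_nonneg_left ((Matrix.toEuclideanCLM (𝕜 := ℝ) A).le_opNorm v)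
          (norm_nonneg v)
    _ = opNorm A * ‖v‖ ^ 2 := by ring

/-- Softmax probability stability: with `α = ln K`, if `M ⪰ d⁻¹ I` and `‖M - M'‖ ≤ 1/R` with
`R ≥ 100 λ⁻¹ d ln K`, then the softmax selection probabilities under `M'` are at least
`(1 - λ/30)` times those under `M`. -/
theorem stmt10 {d : ℕ} (hd : 0 < d) (K : ℕ) (hK : 2 ≤ K) (α : ℝ) (hα : α = Real.log K)
    (lam : ℝ) (hlam0 : 0 < lam) (hlam1 : lam < 1)
    (R : ℝ) (hR : 100 * lam⁻¹ * d * Real.log K ≤ R)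
    (M M' : Matrix (Fin d) (Fin d) ℝ) (hM : M.IsSymm) (hM' : M'.IsSymm)
    (hMI : (M - (d : ℝ)⁻¹ • 1).PosSemidef)
    (hdiff : opNorm (M - M') ≤ 1 / R)
    (X : Finset (Fin d → ℝ)) (hX : ∀ y ∈ X, y ⬝ᵥ y ≤ 1)
    (x : Fin d → ℝ) (hx : x ∈ X) :
    (1 - lam / 30) * ((x ⬝ᵥ M.mulVec x) ^ α / ∑ y ∈ X, (y ⬝ᵥ M.mulVec y) ^ α)
      ≤ (x ⬝ᵥ M'.mulVec x) ^ α / ∑ y ∈ X, (y ⬝ᵥ M'.mulVec y) ^ α := by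
  have hK1 : (1:ℝ) < K := by exact_mod_cast lt_of_lt_of_le one_lt_two hK
  have hlogK : 0 < Real.log K := Real.log_pos hK1
  have hα0 : 0 < α := hα ▸ hlogK
  have hαlog2 : Real.log 2 ≤ α := by
    rw [hα]; exact Real.log_le_log two_pos (by exact_mod_cast hK)
  have hα69 : (0.69 : ℝ) ≤ α := le_trans (by linarith [Real.log_two_gt_d9]) hαlog2
  have hd1 : (1:ℝ) ≤ d := by exact_mod_cast hd
  have hR0 : 0 < R :=
    lt_of_lt_of_le
      (mul_pos (mul_pos (mul_pos (by norm_num) (inv_pos.mpr hlam0)) (by positivity)) hlogK) hR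
  set t : ℝ := d / R with htdef
  have ht0 : 0 ≤ t := div_nonneg (by positivity) hR0.le
  have htα : α * t ≤ lam / 100 := by
    rw [htdef, mul_div_assoc', div_le_div_iff₀ hR0 (by norm_num)]
    have h1 : lam * (100 * lam⁻¹ * d * Real.log K) ≤ lam * R :=
      mul_le_mul_of_nonneg_left hR hlam0.le
    have h2 : lam * lam⁻¹ = 1 := mul_inv_cancel₀ hlam0.ne'
    calc α * d * 100 = 100 * Real.log K * d := by rw [hα]; ring
      _ = lam * (100 * lam⁻¹ * d * Real.log K) := by
          rw [show lam * (100 * lam⁻¹ * d * Real.log K)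
            = (lam * lam⁻¹) * (100 * d * Real.log K) by ring, h2]; ring
      _ ≤ lam * R := h1
  have ht1 : t ≤ 1 / 69 := by nlinarith
  have ht1' : (68:ℝ)/69 ≤ 1 - t := by linarith
  -- pointwise quadratic form bounds
  have hself : ∀ y : Fin d → ℝ, 0 ≤ y ⬝ᵥ y := fun y =>
    Finset.sum_nonneg fun i _ => mul_self_nonneg _
  have hMy : ∀ y : Fin d → ℝ, (d:ℝ)⁻¹ * (y ⬝ᵥ y) ≤ y ⬝ᵥ M.mulVec y := by
    intro y
    have := hMI.dotProduct_mulVec_nonneg y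
    simp only [star_trivial, Matrix.sub_mulVec, dotProduct_sub, Matrix.smul_mulVec,
      Matrix.one_mulVec, dotProduct_smul, smul_eq_mul] at this
    linarith
  have hMy0 : ∀ y : Fin d → ℝ, 0 ≤ y ⬝ᵥ M.mulVec y := fun y =>
    le_trans (mul_nonneg (by positivity) (hself y)) (hMy y)
  have hlow : ∀ y : Fin d → ℝ, (1 - t) * (y ⬝ᵥ M.mulVec y) ≤ y ⬝ᵥ M'.mulVec y := by
    intro y
    have h1 := (abs_le.mp (le_trans (quad_bound (M - M') y)
      (mul_le_mul_of_nonneg_right hdiff (hself y)))).2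
    have h2 : y ⬝ᵥ (M - M').mulVec y = y ⬝ᵥ M.mulVec y - y ⬝ᵥ M'.mulVec y := by
      simp [Matrix.sub_mulVec, dotProduct_sub]
    have h3 : y ⬝ᵥ y ≤ d * (y ⬝ᵥ M.mulVec y) := by
      have := mul_le_mul_of_nonneg_left (hMy y) (le_of_lt (show (0:ℝ) < d by positivity))
      rw [show (d:ℝ) * ((d:ℝ)⁻¹ * (y ⬝ᵥ y)) = ((d:ℝ) * (d:ℝ)⁻¹) * (y ⬝ᵥ y) by ring,
        mul_inv_cancel₀ (by positivity)] at this
      linarith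
    have h4 : (1 / R) * (y ⬝ᵥ y) ≤ t * (y ⬝ᵥ M.mulVec y) := by
      rw [htdef]
      calc (1 / R) * (y ⬝ᵥ y) ≤ (1 / R) * (d * (y ⬝ᵥ M.mulVec y)) := by
            exact mul_le_mul_of_nonneg_left h3 (by positivity)
        _ = d / R * (y ⬝ᵥ M.mulVec y) := by ring
    rw [h2] at h1; linarith
  have hup : ∀ y : Fin d → ℝ, y ⬝ᵥ M'.mulVec y ≤ (1 + t) * (y ⬝ᵥ M.mulVec y) := by
    intro y
    have h1 := (abs_le.mp (le_trans (quad_bound (M - M') y)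
      (mul_le_mul_of_nonneg_right hdiff (hself y)))).1
    have h2 : y ⬝ᵥ (M - M').mulVec y = y ⬝ᵥ M.mulVec y - y ⬝ᵥ M'.mulVec y := by
      simp [Matrix.sub_mulVec, dotProduct_sub]
    have h3 : y ⬝ᵥ y ≤ d * (y ⬝ᵥ M.mulVec y) := by
      have := mul_le_mul_of_nonneg_left (hMy y) (le_of_lt (show (0:ℝ) < d by positivity))
      rw [show (d:ℝ) * ((d:ℝ)⁻¹ * (y ⬝ᵥ y)) = ((d:ℝ) * (d:ℝ)⁻¹) * (y ⬝ᵥ y) by ring,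
        mul_inv_cancel₀ (by positivity)] at this
      linarith
    have h4 : (1 / R) * (y ⬝ᵥ y) ≤ t * (y ⬝ᵥ M.mulVec y) := by
      rw [htdef]
      calc (1 / R) * (y ⬝ᵥ y) ≤ (1 / R) * (d * (y ⬝ᵥ M.mulVec y)) := by
            exact mul_le_mul_of_nonneg_left h3 (by positivity)
        _ = d / R * (y ⬝ᵥ M.mulVec y) := by ring
    rw [h2] at h1; linarith
  have hM'0 : ∀ y : Fin d → ℝ, 0 ≤ y ⬝ᵥ M'.mulVec y := fun y =>
    le_trans (mul_nonneg (by linarith) (hMy0 y)) (hlow y)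
  -- bounds on (1±t)^α
  have hc2 : (1 + t) ^ α ≤ 1 + lam / 50 := by
    have hlog : Real.log (1 + t) ≤ t := by
      have := Real.log_le_sub_one_of_pos (show (0:ℝ) < 1 + t by linarith)
      linarith
    have h1 : (1 + t) ^ α ≤ Real.exp (lam / 100) := by
      rw [Real.rpow_def_of_pos (by linarith)]
      apply Real.exp_le_exp.mpr
      have : Real.log (1 + t) * α ≤ t * α := mul_le_mul_of_nonneg_right hlog hα0.le
      linarith
    have hE := Real.add_one_le_exp (-(lam / 100))
    rw [Real.exp_neg] at hE
    have hEpos := Real.exp_pos (lam / 100)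
    have h2 : (1 - lam / 100) * Real.exp (lam / 100) ≤ 1 := by
      have := mul_le_mul_of_nonneg_right hE hEpos.le
      rwa [inv_mul_cancel₀ hEpos.ne', show -(lam/100) + 1 = 1 - lam/100 by ring] at this
    nlinarith
  have hc1 : 1 - lam / 90 ≤ (1 - t) ^ α := by
    have h1t : (0:ℝ) < 1 - t := by linarith
    have hlog : -(t / (1 - t)) ≤ Real.log (1 - t) := by
      have h := Real.log_le_sub_one_of_pos (inv_pos.mpr h1t)
      rw [Real.log_inv] at h
      have : (1 - t)⁻¹ - 1 = t / (1 - t) := by field_simp; ring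
      linarith [this ▸ h]
    have hαt : α * (t / (1 - t)) ≤ lam / 90 := by
      have hlt : lam * t ≤ lam * (1 / 69) := mul_le_mul_of_nonneg_left ht1 hlam0.le
      rw [mul_div_assoc', div_le_iff₀ h1t]
      linarith
    rw [Real.rpow_def_of_pos h1t]
    have h2 : -(lam / 90) ≤ Real.log (1 - t) * α := by
      have := mul_le_mul_of_nonneg_right hlog hα0.le
      linarith
    calc 1 - lam / 90 = -(lam/90) + 1 := by ring
      _ ≤ Real.exp (-(lam / 90)) := Real.add_one_le_exp _
      _ ≤ Real.exp (Real.log (1 - t) * α) := Real.exp_le_exp.mpr h2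
  -- rpow comparisons
  have hbup : ∀ y : Fin d → ℝ, (y ⬝ᵥ M'.mulVec y) ^ α ≤ (1 + lam/50) * (y ⬝ᵥ M.mulVec y) ^ α := by
    intro y
    calc (y ⬝ᵥ M'.mulVec y) ^ α ≤ ((1 + t) * (y ⬝ᵥ M.mulVec y)) ^ α :=
          Real.rpow_le_rpow (hM'0 y) (hup y) hα0.le
      _ = (1 + t) ^ α * (y ⬝ᵥ M.mulVec y) ^ α := Real.mul_rpow (by linarith) (hMy0 y)
      _ ≤ (1 + lam/50) * (y ⬝ᵥ M.mulVec y) ^ α :=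
          mul_le_mul_of_nonneg_right hc2 (Real.rpow_nonneg (hMy0 y) α)
  have hblow : ∀ y : Fin d → ℝ, (1 - lam/90) * (y ⬝ᵥ M.mulVec y) ^ α ≤ (y ⬝ᵥ M'.mulVec y) ^ α := by
    intro y
    calc (1 - lam/90) * (y ⬝ᵥ M.mulVec y) ^ α
        ≤ (1 - t) ^ α * (y ⬝ᵥ M.mulVec y) ^ α :=
          mul_le_mul_of_nonneg_right hc1 (Real.rpow_nonneg (hMy0 y) α)
      _ = ((1 - t) * (y ⬝ᵥ M.mulVec y)) ^ α :=
          (Real.mul_rpow (by linarith) (hMy0 y)).symm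
      _ ≤ (y ⬝ᵥ M'.mulVec y) ^ α :=
          Real.rpow_le_rpow (mul_nonneg (by linarith) (hMy0 y)) (hlow y) hα0.le
  set A := ∑ y ∈ X, (y ⬝ᵥ M.mulVec y) ^ α with hA
  set B := ∑ y ∈ X, (y ⬝ᵥ M'.mulVec y) ^ α with hB
  have hA0 : 0 ≤ A := Finset.sum_nonneg fun y _ => Real.rpow_nonneg (hMy0 y) α
  have hB0 : 0 ≤ B := Finset.sum_nonneg fun y _ => Real.rpow_nonneg (hM'0 y) α
  have hBA : B ≤ (1 + lam/50) * A := by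
    rw [hA, hB, Finset.mul_sum]
    exact Finset.sum_le_sum fun y _ => hbup y
  have hAB : (1 - lam/90) * A ≤ B := by
    rw [hA, hB, Finset.mul_sum]
    exact Finset.sum_le_sum fun y _ => hblow y
  rcases eq_or_lt_of_le hA0 with hAz | hApos
  · -- A = 0 case
    have hax : (x ⬝ᵥ M.mulVec x) ^ α = 0 := by
      have := (Finset.sum_eq_zero_iff_of_nonneg
        (fun y _ => Real.rpow_nonneg (hMy0 y) α)).mp hAz.symm
      exact this x hx
    rw [hax]
    simp only [zero_div, mul_zero]
    exact div_nonneg (Real.rpow_nonneg (hM'0 x) α) hB0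
  · have hBpos : 0 < B := lt_of_lt_of_le (mul_pos (by linarith) hApos) hAB
    have hax0 : 0 ≤ (x ⬝ᵥ M.mulVec x) ^ α := Real.rpow_nonneg (hMy0 x) α
    have key : (1 - lam/30) * ((x ⬝ᵥ M.mulVec x) ^ α / A)
        ≤ ((1 - lam/90) * (x ⬝ᵥ M.mulVec x) ^ α) / ((1 + lam/50) * A) := by
      rw [mul_div_assoc', div_le_div_iff₀ hApos (mul_pos (by linarith) hApos)]
      linarith [mul_nonneg (mul_nonneg hlam0.le hax0) hA0,
        mul_nonneg (mul_nonneg (mul_nonneg hlam0.le hlam0.le) hax0) hA0]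
    refine le_trans key (div_le_div₀ (Real.rpow_nonneg (hM'0 x) α) (hblow x) hBpos hBA)
end

section
/- KL-divergence bound for Gaussian reward sequences in the lower-bound construction: let T ≥ 1, L ≤ (ln T)/6, M = L/4, υ = T^{−1/(2(L+1))}, and z_{j'} = υ^{−(j'+1)}/√T. For two sign sequences u, u′ ∈ {±1}^L agreeing on the first j−1 coordinates with u_j ≠ u′_j, the per-step mean reward difference in stage j′ < j is at most z_{j'}·|ψ(u) − ψ(u′)| ≤ 4 z_{j'} υʲ; consequently, the sum of KL divergences between unit-variance Gaussians over the first j−1 stages, each of length at most 2T/L, satisfies ∑_{j'=1}^{j−1} (2T/L) · 8 z_{j'}² υ^{2j} ≤ 32/L, which is at most 0.1 when L ≥ 320. -/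
private lemma geom_two_aux (x : ℝ) (hx0 : 0 ≤ x) (hx : x ≤ 1/2) (n : ℕ) :
    ∑ i ∈ Finset.range n, x ^ i ≤ 2 := by
  have hsum0 : 0 ≤ ∑ i ∈ Finset.range n, x ^ i :=
    Finset.sum_nonneg fun i _ => pow_nonneg hx0 i
  have hkey := geom_sum_mul x n
  have hxn : 0 ≤ x ^ n := pow_nonneg hx0 n
  nlinarith [mul_nonneg hsum0 (by linarith : (0:ℝ) ≤ 1/2 - x)]

/-- KL-divergence bound for the Gaussian reward sequences in the lower-bound construction. -/
theorem stmt19 (T : ℝ) (hT : 1 ≤ T) (L : ℕ) (hL1 : 1 ≤ L)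
    (hL : (L : ℝ) ≤ Real.log T / 6)
    (υ : ℝ) (hυ : υ = T ^ (-(1 / (2 * ((L : ℝ) + 1)))))
    (z : ℕ → ℝ) (hz : ∀ j', z j' = (υ ^ (j' + 1))⁻¹ / Real.sqrt T)
    (u u' : ℕ → ℝ) (hu : ∀ i, u i = 1 ∨ u i = -1) (hu' : ∀ i, u' i = 1 ∨ u' i = -1)
    (j : ℕ) (hj1 : 1 ≤ j) (hjL : j ≤ L)
    (hagree : ∀ i < j, u i = u' i) (hdiff : u j ≠ u' j)
    (ψ ψ' : ℝ)
    (hψ : ψ = 1 / 2 + ∑ i ∈ Finset.Icc 1 L, u i * υ ^ i)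
    (hψ' : ψ' = 1 / 2 + ∑ i ∈ Finset.Icc 1 L, u' i * υ ^ i) :
    |ψ - ψ'| ≤ 4 * υ ^ j ∧
      (∀ j', z j' * |ψ - ψ'| ≤ 4 * z j' * υ ^ j) ∧
      (∑ j' ∈ Finset.Icc 1 (j - 1), (2 * T / (L : ℝ)) * (8 * (z j') ^ 2 * υ ^ (2 * j))
          ≤ 32 / (L : ℝ)) ∧
      ((320 : ℝ) ≤ (L : ℝ) → 32 / (L : ℝ) ≤ 0.1) := by
  have hT0 : (0:ℝ) < T := lt_of_lt_of_le one_pos hT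
  have hL1' : (1:ℝ) ≤ (L:ℝ) := by exact_mod_cast hL1
  have hlog : 6 * (L:ℝ) ≤ Real.log T := by linarith
  have hυpos : 0 < υ := by rw [hυ]; exact Real.rpow_pos_of_pos hT0 _
  -- the key numeric bound on υ
  have hυle : υ ≤ 2/5 := by
    rw [hυ, Real.rpow_def_of_pos hT0]
    have hpos : (0:ℝ) < 2 * ((L:ℝ) + 1) := by positivity
    have harg : Real.log T * -(1 / (2 * ((L:ℝ) + 1))) ≤ -(3/2) := by
      have h1 : (3:ℝ)/2 ≤ Real.log T / (2 * ((L:ℝ) + 1)) := by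
        rw [le_div_iff₀ hpos]; nlinarith
      have h2 : Real.log T * -(1 / (2 * ((L:ℝ) + 1)))
          = -(Real.log T / (2 * ((L:ℝ) + 1))) := by ring
      rw [h2]; linarith
    calc Real.exp (Real.log T * -(1 / (2 * ((L:ℝ) + 1))))
        ≤ Real.exp (-(3/2)) := Real.exp_le_exp.mpr harg
      _ ≤ 2/5 := by
          rw [Real.exp_neg, inv_le_comm₀ (Real.exp_pos _) (by norm_num)]
          calc (2/5:ℝ)⁻¹ = 3/2 + 1 := by norm_num
            _ ≤ Real.exp (3/2) := Real.add_one_le_exp _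
  have hυhalf : υ ≤ 1/2 := by linarith
  have hυsq : υ^2 ≤ 1/2 := by nlinarith
  -- geometric tail bound
  have hgeom : ∑ i ∈ Finset.Icc j L, υ ^ i ≤ 2 * υ ^ j := by
    have hIcc : Finset.Icc j L = Finset.Ico j (L+1) := by
      exact (Finset.Ico_add_one_right_eq_Icc _ _).symm
    rw [hIcc, Finset.sum_Ico_eq_sum_range]
    have : ∀ i ∈ Finset.range (L + 1 - j), υ ^ (j + i) = υ ^ j * υ ^ i := by
      intro i _; rw [pow_add]
    rw [Finset.sum_congr rfl this, ← Finset.mul_sum]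
    have := geom_two_aux υ hυpos.le hυhalf (L + 1 - j)
    nlinarith [pow_nonneg hυpos.le j]
  -- the difference of ψ's
  have hψdiff : ψ - ψ' = ∑ i ∈ Finset.Icc j L, (u i - u' i) * υ ^ i := by
    rw [hψ, hψ']
    have h1 : (1/2 + ∑ i ∈ Finset.Icc 1 L, u i * υ ^ i)
        - (1/2 + ∑ i ∈ Finset.Icc 1 L, u' i * υ ^ i)
        = ∑ i ∈ Finset.Icc 1 L, (u i - u' i) * υ ^ i := by
      simp only [sub_mul]
      rw [Finset.sum_sub_distrib]
      ring
    rw [h1]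
    refine (Finset.sum_subset (Finset.Icc_subset_Icc hj1 le_rfl) ?_).symm
    intro i hi hni
    rw [Finset.mem_Icc] at hi
    rw [Finset.mem_Icc] at hni
    have hij : i < j := by omega
    rw [hagree i hij, sub_self, zero_mul]
  have h4 : |ψ - ψ'| ≤ 4 * υ ^ j := by
    rw [hψdiff]
    calc |∑ i ∈ Finset.Icc j L, (u i - u' i) * υ ^ i|
        ≤ ∑ i ∈ Finset.Icc j L, |(u i - u' i) * υ ^ i| :=
          Finset.abs_sum_le_sum_abs _ _
      _ ≤ ∑ i ∈ Finset.Icc j L, 2 * υ ^ i := by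
          refine Finset.sum_le_sum fun i _ => ?_
          rw [abs_mul, abs_of_nonneg (pow_nonneg hυpos.le i)]
          have : |u i - u' i| ≤ 2 := by
            rcases hu i with h | h <;> rcases hu' i with h' | h' <;>
              rw [h, h'] <;> norm_num
          have hp : (0:ℝ) ≤ υ ^ i := pow_nonneg hυpos.le i
          nlinarith
      _ = 2 * ∑ i ∈ Finset.Icc j L, υ ^ i := (Finset.mul_sum _ _ _).symm
      _ ≤ 2 * (2 * υ ^ j) := by
          have := hgeom; linarith
      _ = 4 * υ ^ j := by ring
  refine ⟨h4, ?_, ?_, ?_⟩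
  · intro j'
    have hz' : 0 ≤ z j' := by
      rw [hz]; positivity
    calc z j' * |ψ - ψ'| ≤ z j' * (4 * υ ^ j) :=
          mul_le_mul_of_nonneg_left h4 hz'
      _ = 4 * z j' * υ ^ j := by ring
  · -- the KL sum
    have hL0 : (0:ℝ) < (L:ℝ) := by linarith
    have hsqT : Real.sqrt T ^ 2 = T := Real.sq_sqrt hT0.le
    have hterm : ∀ j' ∈ Finset.Icc 1 (j - 1),
        (2 * T / (L : ℝ)) * (8 * (z j') ^ 2 * υ ^ (2 * j))
          = 16 / (L:ℝ) * (υ^2) ^ (j - 1 - j') := by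
      intro j' hj'
      rw [Finset.mem_Icc] at hj'
      have hexp : υ ^ (2*j) = υ ^ (2*(j'+1)) * υ ^ (2*(j-1-j')) := by
        rw [← pow_add]; congr 1; omega
      have hzsq : (z j')^2 = ((υ^(j'+1))^2)⁻¹ / T := by
        rw [hz, div_pow, hsqT, inv_pow]
      rw [hzsq, hexp, ← pow_mul, ← pow_mul]
      have hne : υ ^ (2*(j'+1)) ≠ 0 := pow_ne_zero _ hυpos.ne'
      field_simp
      ring
    rw [Finset.sum_congr rfl hterm, ← Finset.mul_sum]
    have hsum : ∑ j' ∈ Finset.Icc 1 (j - 1), (υ^2) ^ (j - 1 - j') ≤ 2 := by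
      have hIcc : Finset.Icc 1 (j-1) = Finset.Ico 1 (j-1+1) := by
        exact (Finset.Ico_add_one_right_eq_Icc _ _).symm
      rw [hIcc, Finset.sum_Ico_eq_sum_range]
      have h1 : ∀ i ∈ Finset.range (j - 1 + 1 - 1), (υ^2) ^ (j - 1 - (1 + i))
          = (υ^2) ^ (j - 1 - 1 - i) := by
        intro i _; congr 1; omega
      rw [Finset.sum_congr rfl h1]
      have h2 : j - 1 + 1 - 1 = j - 1 := by omega
      rw [h2, Finset.sum_range_reflect (fun i => (υ^2)^i) (j-1)]
      exact geom_two_aux _ (by positivity) hυsq _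
    have h16 : (0:ℝ) ≤ 16 / (L:ℝ) := by positivity
    calc 16 / (L:ℝ) * ∑ j' ∈ Finset.Icc 1 (j - 1), (υ^2) ^ (j - 1 - j')
        ≤ 16 / (L:ℝ) * 2 := mul_le_mul_of_nonneg_left hsum h16
      _ = 32 / (L:ℝ) := by ring
  · intro h320
    have hL0 : (0:ℝ) < (L:ℝ) := by linarith
    rw [div_le_iff₀ hL0]
    nlinarith
end
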